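/- Let C ⊆ R^m be a pointed closed convex cone, p ∈ R^m and q ∈ C \ {0}. Then sup { λ ∈ R : p − λq ∈ C } = inf { ⟨p, v⟩ : v ∈ C*, ⟨q, v⟩ = 1 }. -/

import Mathlib

/-- Conic duality: for a pointed closed convex cone `C`, `p ∈ ℝᵐ` and `q ∈ C \ {0}`,
`sup {λ : p − λq ∈ C} = inf {⟨p,v⟩ : v ∈ C*, ⟨q,v⟩ = 1}`. -/
theorem conic_duality (m : ℕ) (C : Set (EuclideanSpace ℝ (Fin m)))
    (hconv : Convex ℝ C) (hclosed : IsClosed C)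
    (hcone : ∀ c : ℝ, 0 ≤ c → ∀ x ∈ C, c • x ∈ C)
    (hpointed : C ∩ (-C) = {0})
    (p q : EuclideanSpace ℝ (Fin m)) (hq : q ∈ C) (hq0 : q ≠ 0) :
    sSup {lam : ℝ | p - lam • q ∈ C}
      = sInf {r : ℝ | ∃ v ∈ (ProperCone.innerDual C : Set (EuclideanSpace ℝ (Fin m))),
          (inner ℝ q v : ℝ) = 1 ∧ r = (inner ℝ p v : ℝ)} := by
  classical
  set S : Set ℝ := {lam : ℝ | p - lam • q ∈ C} with hS_def
  set T : Set ℝ := {r : ℝ | ∃ v ∈ (ProperCone.innerDual C : Set (EuclideanSpace ℝ (Fin m))),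
      (inner ℝ q v : ℝ) = 1 ∧ r = (inner ℝ p v : ℝ)} with hT_def
  -- C as a ConvexCone
  have hadd : ∀ x ∈ C, ∀ y ∈ C, x + y ∈ C := by
    intro x hx y hy
    have h2 : (1/2 : ℝ) • x + (1/2 : ℝ) • y ∈ C :=
      hconv hx hy (by norm_num) (by norm_num) (by norm_num)
    have := hcone 2 (by norm_num) _ h2
    simpa [smul_add, smul_smul] using this
  let K : ConvexCone ℝ (EuclideanSpace ℝ (Fin m)) :=
    { carrier := C
      smul_mem' := fun c hc x hx => hcone c hc.le x hx
      add_mem' := fun x hx y hy => hadd x hx y hy }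
  have hKC : (K : Set (EuclideanSpace ℝ (Fin m))) = C := rfl
  have sep : ∀ b : EuclideanSpace ℝ (Fin m), b ∉ C →
      ∃ y : EuclideanSpace ℝ (Fin m), (∀ x ∈ C, 0 ≤ (inner ℝ x y : ℝ)) ∧ (inner ℝ y b : ℝ) < 0 := by
    intro b hb
    let K' : ProperCone ℝ (EuclideanSpace ℝ (Fin m)) :=
      { carrier := C
        add_mem' := fun {x y} hx hy => hadd x hx y hy
        zero_mem' := by simpa using hcone 0 le_rfl q hq
        smul_mem' := fun c x hx => hcone c c.2 x hx
        isClosed' := hclosed }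
    obtain ⟨y, hy1, hy2⟩ := ProperCone.hyperplane_separation' (C := K') hb
    exact ⟨y, hy1, by rwa [real_inner_comm]⟩
  -- a point v₀ ∈ C* with ⟪q, v₀⟫ = 1
  have hnq : -q ∉ C := by
    intro hnq
    have : q ∈ C ∩ (-C) := ⟨hq, by simpa using hnq⟩
    rw [hpointed] at this
    exact hq0 (by simpa using this)
  obtain ⟨y₀, hy₀C, hy₀q⟩ := sep (-q) hnq
  have hqy₀ : (0:ℝ) < (inner ℝ q y₀ : ℝ) := by
    have : (inner ℝ y₀ (-q) : ℝ) = -(inner ℝ q y₀ : ℝ) := by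
      rw [inner_neg_right, real_inner_comm]
    linarith [hy₀q, this ▸ hy₀q, (this ▸ hy₀q : -(inner ℝ q y₀ : ℝ) < 0)]
  set v₀ : EuclideanSpace ℝ (Fin m) := ((inner ℝ q y₀ : ℝ))⁻¹ • y₀ with hv₀_def
  have hv₀C : ∀ x ∈ C, 0 ≤ (inner ℝ x v₀ : ℝ) := by
    intro x hx
    rw [hv₀_def, real_inner_smul_right]
    exact mul_nonneg (inv_nonneg.2 hqy₀.le) (hy₀C x hx)
  have hv₀q : (inner ℝ q v₀ : ℝ) = 1 := by
    rw [hv₀_def, real_inner_smul_right]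
    exact inv_mul_cancel₀ (ne_of_gt hqy₀)
  have hv₀T : (inner ℝ p v₀ : ℝ) ∈ T := by
    exact ⟨v₀, ProperCone.mem_innerDual.2 hv₀C, hv₀q, rfl⟩
  have hTne : T.Nonempty := ⟨_, hv₀T⟩
  -- Key lemma: if p - μ q ∉ C then T has an element < μ
  have keyA : ∀ μ : ℝ, p - μ • q ∉ C → ∃ r ∈ T, r < μ := by
    intro μ hμ
    obtain ⟨y, hyC, hyb⟩ := sep (p - μ • q) hμ
    have hqy : (0:ℝ) ≤ (inner ℝ q y : ℝ) := by
      exact hyC q hq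
    have hpy : (inner ℝ p y : ℝ) < μ * (inner ℝ q y : ℝ) := by
      have : (inner ℝ y (p - μ • q) : ℝ) = (inner ℝ p y : ℝ) - μ * (inner ℝ q y : ℝ) := by
        rw [inner_sub_right, real_inner_smul_right, real_inner_comm y p, real_inner_comm y q]
      linarith [this ▸ hyb]
    rcases lt_or_eq_of_le hqy with hqy' | hqy'
    · -- ⟪q,y⟫ > 0 : rescale
      refine ⟨(inner ℝ p (((inner ℝ q y : ℝ))⁻¹ • y) : ℝ),
        ⟨((inner ℝ q y : ℝ))⁻¹ • y, ProperCone.mem_innerDual.2 ?_, ?_, rfl⟩, ?_⟩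
      · intro x hx
        rw [real_inner_smul_right]
        exact mul_nonneg (inv_nonneg.2 hqy'.le) (hyC x hx)
      · rw [real_inner_smul_right]; exact inv_mul_cancel₀ (ne_of_gt hqy')
      · rw [real_inner_smul_right]
        rw [inv_mul_lt_iff₀ hqy', mul_comm]
        exact hpy
    · -- ⟪q,y⟫ = 0, hence ⟪p,y⟫ < 0 : take v₀ + t y with t large
      have hqy0 : (inner ℝ q y : ℝ) = 0 := hqy'.symm
      have hpy0 : (inner ℝ p y : ℝ) < 0 := by rw [hqy0] at hpy; simpa using hpy
      set t : ℝ := max 0 ((μ - 1 - (inner ℝ p v₀ : ℝ)) / (inner ℝ p y : ℝ)) with ht_def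
      have ht0 : 0 ≤ t := le_max_left _ _
      refine ⟨(inner ℝ p (v₀ + t • y) : ℝ),
        ⟨v₀ + t • y, ProperCone.mem_innerDual.2 ?_, ?_, rfl⟩, ?_⟩
      · intro x hx
        rw [inner_add_right, real_inner_smul_right x y t]
        exact add_nonneg (hv₀C x hx) (mul_nonneg ht0 (hyC x hx))
      · rw [inner_add_right, real_inner_smul_right q y t, hv₀q, hqy0]
        ring
      · rw [inner_add_right, real_inner_smul_right p y t]
        have htle : (μ - 1 - (inner ℝ p v₀ : ℝ)) / (inner ℝ p y : ℝ) ≤ t := le_max_right _ _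
        have : t * (inner ℝ p y : ℝ) ≤ μ - 1 - (inner ℝ p v₀ : ℝ) := by
          rw [div_le_iff_of_neg hpy0] at htle
          linarith
        linarith
  -- Weak duality
  have weak : ∀ lam ∈ S, ∀ r ∈ T, lam ≤ r := by
    rintro lam hlam r ⟨v, hvC, hvq, rfl⟩
    have hv : ∀ x ∈ C, 0 ≤ (inner ℝ x v : ℝ) := ProperCone.mem_innerDual.1 hvC
    have := hv _ hlam
    rw [inner_sub_left, real_inner_smul_left, hvq] at this
    linarith
  rcases Set.eq_empty_or_nonempty S with hSe | hSne
  · -- S empty: both sides are the junk value 0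
    have hTnb : ¬ BddBelow T := by
      rintro ⟨b, hb⟩
      have hb' : p - b • q ∉ C := by
        intro h
        have : b ∈ S := h
        rw [hSe] at this
        exact this
      obtain ⟨r, hrT, hrb⟩ := keyA b hb'
      exact absurd (hb hrT) (not_le.2 hrb)
    rw [hSe, Real.sSup_empty, Real.sInf_of_not_bddBelow hTnb]
  · obtain ⟨lam₀, hlam₀⟩ := hSne
    have hSbdd : BddAbove S := ⟨_, fun lam hlam => weak lam hlam _ hv₀T⟩
    have hTbdd : BddBelow T := ⟨lam₀, fun r hr => weak lam₀ hlam₀ r hr⟩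
    apply le_antisymm
    · exact csSup_le ⟨lam₀, hlam₀⟩ fun lam hlam => le_csInf hTne fun r hr => weak lam hlam r hr
    · by_contra hlt
      push_neg at hlt
      set μ : ℝ := (sSup S + sInf T) / 2 with hμ_def
      have h1 : sSup S < μ := by rw [hμ_def]; linarith
      have h2 : μ < sInf T := by rw [hμ_def]; linarith
      have hμC : p - μ • q ∉ C := by
        intro h
        exact absurd (le_csSup hSbdd (h : μ ∈ S)) (not_le.2 h1)
      obtain ⟨r, hrT, hrμ⟩ := keyA μ hμC
      exact absurd (csInf_le hTbdd hrT) (not_le.2 (hrμ.trans h2))
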